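/- Let d ≥ 1, g ≥ 0, and suppose T₁, …, T_d, X₁, …, X_g are bounded operators on H with each Xⱼ self-adjoint and Σᵢ TᵢTᵢ* + Σⱼ Xⱼ² ≤ I, but Σᵢ TᵢTᵢ* + Σⱼ Xⱼ² ≠ I. Then there is a nontrivial dilation staying in the set: with A = (I − Σ TᵢTᵢ* − Σ Xⱼ²)^{1/2} ≠ 0, the tuple with first coordinate [[T₁, A],[0, 0]], other Tᵢ-coordinates [[Tᵢ, 0],[0, 0]], and Xⱼ-coordinates [[Xⱼ, 0],[0, 0]], satisfies the same contraction inequality Σ SᵢSᵢ* + Σ Yⱼ² ≤ I, with self-adjoint Yⱼ, and has a nonzero off-diagonal block. -/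

import Mathlib

open ContinuousLinearMap
variable {H : Type*} [NormedAddCommGroup H] [InnerProductSpace ℂ H]

/-- The block operator `[[A, B], [C, D]]` on the Hilbert space direct sum `H ⊕ H`. -/
noncomputable def blockOp (A B C D : H →L[ℂ] H) :
    WithLp 2 (H × H) →L[ℂ] WithLp 2 (H × H) :=
  ((WithLp.prodContinuousLinearEquiv 2 ℂ H H).symm : H × H →L[ℂ] WithLp 2 (H × H)) ∘L
    ((A ∘L ContinuousLinearMap.fst ℂ H H + B ∘L ContinuousLinearMap.snd ℂ H H).prod
      (C ∘L ContinuousLinearMap.fst ℂ H H + D ∘L ContinuousLinearMap.snd ℂ H H)) ∘L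
    ((WithLp.prodContinuousLinearEquiv 2 ℂ H H : WithLp 2 (H × H) ≃L[ℂ] H × H) :
      WithLp 2 (H × H) →L[ℂ] H × H)

lemma blockOp_apply (A B C D : H →L[ℂ] H) (x : WithLp 2 (H × H)) :
    blockOp A B C D x = (WithLp.prodContinuousLinearEquiv 2 ℂ H H).symm
      (A ((WithLp.prodContinuousLinearEquiv 2 ℂ H H) x).1
        + B ((WithLp.prodContinuousLinearEquiv 2 ℂ H H) x).2,
       C ((WithLp.prodContinuousLinearEquiv 2 ℂ H H) x).1
        + D ((WithLp.prodContinuousLinearEquiv 2 ℂ H H) x).2) := rfl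

lemma blockOp_comp (A B C D A' B' C' D' : H →L[ℂ] H) :
    blockOp A B C D ∘L blockOp A' B' C' D' =
      blockOp (A ∘L A' + B ∘L C') (A ∘L B' + B ∘L D')
        (C ∘L A' + D ∘L C') (C ∘L B' + D ∘L D') := by
  ext x
  simp only [comp_apply, blockOp_apply, ContinuousLinearEquiv.apply_symm_apply, map_add,
    add_apply, comp_apply]
  exact congrArg _ (Prod.ext (by abel) (by abel))

lemma blockOp_add (A B C D A' B' C' D' : H →L[ℂ] H) :
    blockOp A B C D + blockOp A' B' C' D' =
      blockOp (A + A') (B + B') (C + C') (D + D') := by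
  ext x
  simp only [add_apply, blockOp_apply]
  rw [← map_add]
  exact congrArg _ (Prod.ext (by simp only [add_apply, Prod.fst_add, Prod.snd_add]; abel)
    (by simp only [add_apply, Prod.fst_add, Prod.snd_add]; abel))

lemma blockOp_one : (blockOp 1 0 0 1 : WithLp 2 (H × H) →L[ℂ] WithLp 2 (H × H)) = 1 := by
  ext x
  simp only [blockOp_apply, one_apply, zero_apply, add_zero, zero_add, one_def]
  exact (WithLp.prodContinuousLinearEquiv 2 ℂ H H).symm_apply_apply x

section
variable [CompleteSpace H]

lemma blockOp_adjoint (A B C D : H →L[ℂ] H) :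
    adjoint (blockOp A B C D) = blockOp (adjoint A) (adjoint C) (adjoint B) (adjoint D) := by
  symm
  rw [eq_adjoint_iff]
  intro x y
  simp only [blockOp_apply, WithLp.prod_inner_apply]
  simp [inner_add_left, inner_add_right, adjoint_inner_left]
  ring

end

lemma blockOp_sum {ι : Type*} (s : Finset ι) (f : ι → (H →L[ℂ] H)) :
    ∑ i ∈ s, blockOp (f i) 0 0 0 = blockOp (∑ i ∈ s, f i) 0 0 0 := by
  classical
  induction s using Finset.induction with
  | empty => ext x; simp [blockOp_apply, Prod.mk_zero_zero]
  | insert _ _ h ih =>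
    rw [Finset.sum_insert h, Finset.sum_insert h, ih, blockOp_add]
    simp

lemma adjoint_zero' [CompleteSpace H] : adjoint (0 : H →L[ℂ] H) = 0 := by
  rw [← star_eq_adjoint, star_zero]

lemma adjoint_id' [CompleteSpace H] : adjoint (1 : H →L[ℂ] H) = 1 := by
  rw [← star_eq_adjoint, star_one]

/-- Theorem 2.8 ('only if', condition (1)): if `∑ Tᵢ Tᵢ* + ∑ Xⱼ² ≤ I` but the sum
is not equal to `I`, then with `A = (I − ∑ Tᵢ Tᵢ* − ∑ Xⱼ²)^{1/2} ≠ 0` the indicated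
block dilation stays in `D^{d,g}` and is nontrivial. -/
theorem stmt_4 [CompleteSpace H] (d g : ℕ) (hd : 1 ≤ d)
    (T : Fin d → H →L[ℂ] H) (X : Fin g → H →L[ℂ] H)
    (hXsa : ∀ j, IsSelfAdjoint (X j))
    (hcontr : (1 - (∑ i, (T i) ∘L adjoint (T i) + ∑ j, (X j) ∘L (X j))).IsPositive)
    (hne : ∑ i, (T i) ∘L adjoint (T i) + ∑ j, (X j) ∘L (X j) ≠ 1)
    (A : H →L[ℂ] H) (hA : A.IsPositive)
    (hAsq : A ∘L A = 1 - (∑ i, (T i) ∘L adjoint (T i) + ∑ j, (X j) ∘L (X j)))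
    (S : Fin d → WithLp 2 (H × H) →L[ℂ] WithLp 2 (H × H))
    (Y : Fin g → WithLp 2 (H × H) →L[ℂ] WithLp 2 (H × H))
    (hS : ∀ i, S i = if i = (⟨0, hd⟩ : Fin d) then blockOp (T i) A 0 0
      else blockOp (T i) 0 0 0)
    (hY : ∀ j, Y j = blockOp (X j) 0 0 0) :
    A ≠ 0 ∧
      (1 - (∑ i, (S i) ∘L adjoint (S i) + ∑ j, (Y j) ∘L (Y j))).IsPositive ∧
      (∀ j, IsSelfAdjoint (Y j)) := by
  classical
  have hAadj : adjoint A = A := hA.isSelfAdjoint.adjoint_eq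
  refine ⟨?_, ?_, ?_⟩
  · intro h
    apply hne
    rw [h] at hAsq
    simp only [zero_comp] at hAsq
    exact (sub_eq_zero.mp hAsq.symm).symm
  · -- compute each S i ∘L adjoint (S i)
    have hSS : ∀ i, S i ∘L adjoint (S i) =
        blockOp (T i ∘L adjoint (T i) + if i = (⟨0, hd⟩ : Fin d) then A ∘L A else 0) 0 0 0 := by
      intro i
      rw [hS i]
      split_ifs with h
      · rw [blockOp_adjoint, blockOp_comp, hAadj]
        simp
      · rw [blockOp_adjoint, blockOp_comp]
        simp
    have hYY : ∀ j, Y j ∘L Y j = blockOp (X j ∘L X j) 0 0 0 := by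
      intro j
      rw [hY j, blockOp_comp]
      simp
    have hsum : (∑ i, (S i) ∘L adjoint (S i) + ∑ j, (Y j) ∘L (Y j)) =
        blockOp 1 0 0 0 := by
      simp only [hSS, hYY, blockOp_sum, blockOp_add]
      congr 1
      · rw [Finset.sum_add_distrib, Finset.sum_ite_eq' Finset.univ (⟨0, hd⟩ : Fin d)
          (fun _ => A ∘L A)]
        simp only [Finset.mem_univ, if_true, Finset.sum_const_zero]
        rw [hAsq]
        abel
      · simp
      · simp
      · simp
    have hrest : (1 : WithLp 2 (H × H) →L[ℂ] WithLp 2 (H × H)) - blockOp 1 0 0 0 =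
        blockOp 0 0 0 1 := by
      rw [← blockOp_one, sub_eq_iff_eq_add, blockOp_add]
      simp
    rw [hsum, hrest]
    constructor
    · rw [← isSelfAdjoint_iff_isSymmetric, IsSelfAdjoint, star_eq_adjoint, blockOp_adjoint, adjoint_id', adjoint_zero']
    · intro x
      rw [reApplyInnerSelf_apply]
      simp only [blockOp_apply, WithLp.prod_inner_apply]
      simp only [blockOp_apply, WithLp.prod_inner_apply, map_zero, zero_apply, add_zero,
        zero_add, one_apply, WithLp.prodContinuousLinearEquiv_symm_apply,
        WithLp.prodContinuousLinearEquiv_apply, WithLp.toLp_fst, WithLp.toLp_snd,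
        WithLp.ofLp_fst, WithLp.ofLp_snd, inner_zero_left, map_zero, zero_add]
      exact inner_self_nonneg
  · intro j
    rw [hY j, IsSelfAdjoint, star_eq_adjoint, blockOp_adjoint, adjoint_zero',
      ← star_eq_adjoint, (hXsa j).star_eq]
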